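/- arXiv:2108.00245 — 4 statements merged into one kernel-verified Lean document; each statement's English description precedes it below -/
import Mathlib

section
/- Let (G,T) be a graft, let F be a minimum join of (G,T), and let X ⊆ V(G) be an F-combic set. Let C be a connected component of G − X with |V(C) ∩ T| odd, let e_C be the unique edge in δ_G(C) ∩ F, and let r_C ∈ V(C) be the end of e_C lying in C. Then F ∩ E(C) is a minimum join of the graft (C, (T ∩ V(C)) Δ {r_C}). -/
open scoped Classical

variable {V : Type*}

/-- The `F`-weight of a walk: number of edges outside `F` minus number of edges in `F`. -/
noncomputable def walkWeight {G : SimpleGraph V} (F : Set (Sym2 V)) {x y : V}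
    (p : G.Walk x y) : ℤ :=
  ((p.edges.filter fun e => e ∉ F).length : ℤ) -
    ((p.edges.filter fun e => e ∈ F).length : ℤ)

/-- The `F`-distance between `x` and `y`: the minimum `F`-weight of a path between them. -/
noncomputable def distF (G : SimpleGraph V) (F : Set (Sym2 V)) (x y : V) : ℤ :=
  sInf {w : ℤ | ∃ p : G.Walk x y, p.IsPath ∧ walkWeight F p = w}

/-- `F` is a join of the graft `(G, T)`. -/
def IsJoin (G : SimpleGraph V) (T : Set V) (F : Set (Sym2 V)) : Prop :=
  F ⊆ G.edgeSet ∧ ∀ v : V, v ∈ T ↔ Odd {e ∈ F | v ∈ e}.ncard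

/-- `F` is a minimum join of the graft `(G, T)`. -/
def IsMinJoin (G : SimpleGraph V) (T : Set V) (F : Set (Sym2 V)) : Prop :=
  IsJoin G T F ∧ ∀ F' : Set (Sym2 V), IsJoin G T F' → F.ncard ≤ F'.ncard

/-- `(G, T)` is a graft: every connected component contains an even number of vertices of `T`. -/
def IsGraft (G : SimpleGraph V) (T : Set V) : Prop :=
  ∀ v : V, Even {u | u ∈ T ∧ G.Reachable v u}.ncard

/-- `X` is an extreme set: `d_F(x, y) ≥ 0` for all `x, y ∈ X`. -/
def IsExtremeSet (G : SimpleGraph V) (F : Set (Sym2 V)) (X : Set V) : Prop :=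
  ∀ x ∈ X, ∀ y ∈ X, 0 ≤ distF G F x y

/-- `G` is bipartite with vertex set `Vset` and color classes `A`, `B`. -/
def IsBipartitionOn (G : SimpleGraph V) (Vset A B : Set V) : Prop :=
  A ∪ B = Vset ∧ Disjoint A B ∧
    ∀ v w : V, G.Adj v w → (v ∈ A ∧ w ∈ B) ∨ (v ∈ B ∧ w ∈ A)

/-- `X` is a maximal bipartitic extreme set with respect to color classes `A`, `B`. -/
def MaxBipExtreme (G : SimpleGraph V) (F : Set (Sym2 V)) (A B X : Set V) : Prop :=
  IsExtremeSet G F X ∧ (X ⊆ A ∨ X ⊆ B) ∧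
    ∀ X' : Set V, IsExtremeSet G F X' → (X' ⊆ A ∨ X' ⊆ B) → X ⊆ X' → X' = X

/-- `D_X`: the vertices of `Vset ∖ X` at negative `F`-distance from `X`. -/
def Dset (G : SimpleGraph V) (F : Set (Sym2 V)) (Vset X : Set V) : Set V :=
  {y | y ∈ Vset ∧ y ∉ X ∧ ∃ x ∈ X, distF G F x y < 0}

/-- `C_X = Vset ∖ X ∖ D_X`. -/
def Cset (G : SimpleGraph V) (F : Set (Sym2 V)) (Vset X : Set V) : Set V :=
  (Vset \ X) \ Dset G F Vset X

/-- `min_{x ∈ X} d_F(x, y)`. -/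
noncomputable def minDistX (G : SimpleGraph V) (F : Set (Sym2 V)) (X : Set V) (y : V) : ℤ :=
  sInf {d : ℤ | ∃ x ∈ X, distF G F x y = d}

/-- The graph `G − S` obtained by deleting the vertices of `S`. -/
def gDelete (G : SimpleGraph V) (S : Set V) : SimpleGraph V where
  Adj v w := G.Adj v w ∧ v ∉ S ∧ w ∉ S
  symm := ⟨fun v w ⟨h, hv, hw⟩ => ⟨h.symm, hw, hv⟩⟩
  loopless := ⟨fun v h => G.loopless.irrefl v h.1⟩

/-- The subgraph of `G` induced by `S`. -/
def gRestrict (G : SimpleGraph V) (S : Set V) : SimpleGraph V where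
  Adj v w := G.Adj v w ∧ v ∈ S ∧ w ∈ S
  symm := ⟨fun v w ⟨h, hv, hw⟩ => ⟨h.symm, hw, hv⟩⟩
  loopless := ⟨fun v h => G.loopless.irrefl v h.1⟩

/-- `C` is (the vertex set of) a connected component of `G − X`. -/
def IsCompOf (G : SimpleGraph V) (X C : Set V) : Prop :=
  ∃ v, v ∉ X ∧ C = {u | (gDelete G X).Reachable v u}

/-- `δ_G(C)`: the edges of `G` with exactly one end in `C`. -/
def edgeBoundary (G : SimpleGraph V) (C : Set V) : Set (Sym2 V) :=
  {e | e ∈ G.edgeSet ∧ ∃ u v : V, e = s(u, v) ∧ u ∈ C ∧ v ∉ C}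

/-- `X` is an `F`-combic set of the graft `(G, T)`. -/
def IsCombic (G : SimpleGraph V) (T : Set V) (F : Set (Sym2 V)) (X : Set V) : Prop :=
  (∀ u v : V, s(u, v) ∈ F → ¬(u ∈ X ∧ v ∈ X)) ∧
  (∀ C : Set V, IsCompOf G X C → Odd (C ∩ T).ncard →
      (edgeBoundary G C ∩ F).ncard = 1) ∧
  (∀ C : Set V, IsCompOf G X C → Even (C ∩ T).ncard →
      edgeBoundary G C ∩ F = ∅)

/-- The rootlization of `G` by the mount `X`, root `r` and attachment `s`. -/
def rootlize (G : SimpleGraph V) (X : Set V) (r s : V) : SimpleGraph V :=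
  SimpleGraph.fromRel fun v w => G.Adj v w ∨ (v = r ∧ w = s) ∨ (v = s ∧ w ∈ X)

/-- The initial component of `r`: the connected component of `r` in the subgraph
induced by the vertices at nonpositive `F`-distance from `r`. -/
def initComp (G : SimpleGraph V) (F : Set (Sym2 V)) (r : V) : Set V :=
  {x | (gRestrict G {y | distF G F r y ≤ 0}).Reachable r x}

/-- If `X` is `F`-combic and `C` is an odd component of `G − X` with
`e_C` the unique edge of `δ_G(C) ∩ F` and `r_C ∈ C` its end in `C`, then `F ∩ E(C)` is a
minimum join of the graft `(C, (T ∩ V(C)) Δ {r_C})`. -/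
theorem stmt_0 [Fintype V] (G : SimpleGraph V) (T : Set V) (F : Set (Sym2 V)) (X : Set V)
    (hGT : IsGraft G T) (hF : IsMinJoin G T F) (hX : IsCombic G T F X)
    (C : Set V) (hC : IsCompOf G X C) (hCodd : Odd (C ∩ T).ncard)
    (eC : Sym2 V) (heC : edgeBoundary G C ∩ F = {eC})
    (rC : V) (hrC : rC ∈ C) (hrCe : rC ∈ eC) :
    IsMinJoin (gRestrict G C) (symmDiff (T ∩ C) {rC})
      (F ∩ (gRestrict G C).edgeSet) := by
  classical
  obtain ⟨⟨hFsub, hFdeg⟩, hFmin⟩ := hF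
  set EC := (gRestrict G C).edgeSet with hECdef
  -- basic facts about eC
  have heCmem : eC ∈ edgeBoundary G C ∩ F := by rw [heC]; exact rfl
  have heCF : eC ∈ F := heCmem.2
  obtain ⟨heCG, u, w, heCrep0, huC, hwC⟩ := heCmem.1
  have hru : rC = u := by
    rw [heCrep0, Sym2.mem_iff] at hrCe
    rcases hrCe with h | h
    · exact h
    · exact absurd (h ▸ hrC) hwC
  have heCrep : eC = s(rC, w) := by rw [heCrep0, hru]
  -- vertices of edges of EC lie in C
  have hECmem : ∀ e ∈ EC, ∀ v ∈ e, v ∈ C := by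
    intro e he v hv
    induction e with
    | h a b =>
      rw [SimpleGraph.mem_edgeSet] at he
      rcases Sym2.mem_iff.mp hv with h | h
      · exact h ▸ he.2.1
      · exact h ▸ he.2.2
  have hECsub : EC ⊆ G.edgeSet := by
    intro e he
    induction e with
    | h a b =>
      rw [SimpleGraph.mem_edgeSet] at he ⊢
      exact he.1
  have heCnotEC : eC ∉ EC := fun h => hwC (hECmem eC h w (heCrep ▸ Sym2.mem_mk_right _ _))
  -- boundary lemma: an F-edge containing a vertex of C but not inside C is eC, at rC
  have hbd : ∀ e ∈ F, ∀ v ∈ C, v ∈ e → e ∉ EC → e = eC ∧ v = rC := by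
    intro e heF v hvC hve heEC
    obtain ⟨b, rfl⟩ := Sym2.mem_iff_exists.mp hve
    have hGe : s(v, b) ∈ G.edgeSet := hFsub heF
    have hbC : b ∉ C := by
      intro hbC
      exact heEC (by rw [SimpleGraph.mem_edgeSet] at hGe ⊢
                     exact ⟨hGe, hvC, hbC⟩)
    have : s(v, b) ∈ edgeBoundary G C ∩ F := ⟨⟨hGe, v, b, rfl, hvC, hbC⟩, heF⟩
    rw [heC] at this
    have heq : s(v, b) = eC := this
    refine ⟨heq, ?_⟩
    have : v ∈ eC := heq ▸ Sym2.mem_mk_left v b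
    rw [heCrep, Sym2.mem_iff] at this
    rcases this with h | h
    · exact h
    · exact absurd (h ▸ hvC) hwC
  -- characterization of membership in the new T
  have hTnew : ∀ v : V, v ∈ symmDiff (T ∩ C) {rC} ↔
      ((v ∈ T ∧ v ∈ C ∧ v ≠ rC) ∨ (v = rC ∧ rC ∉ T)) := by
    intro v
    rw [Set.mem_symmDiff]
    constructor
    · rintro (⟨⟨hT, hC'⟩, hr⟩ | ⟨hr, hT⟩)
      · exact Or.inl ⟨hT, hC', by simpa using hr⟩
      · rcases Set.mem_singleton_iff.mp hr with rfl
        exact Or.inr ⟨rfl, fun h => hT ⟨h, hrC⟩⟩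
    · rintro (⟨hT, hC', hr⟩ | ⟨rfl, hT⟩)
      · exact Or.inl ⟨⟨hT, hC'⟩, by simpa using hr⟩
      · exact Or.inr ⟨rfl, fun h => hT h.1⟩
  -- the degree set at rC decomposes
  have hrCdec : {e ∈ F | rC ∈ e} = insert eC {e ∈ F ∩ EC | rC ∈ e} := by
    ext e
    simp only [Set.mem_setOf_eq, Set.mem_insert_iff, Set.mem_inter_iff]
    constructor
    · rintro ⟨heF, hre⟩
      by_cases hEC : e ∈ EC
      · exact Or.inr ⟨⟨heF, hEC⟩, hre⟩
      · exact Or.inl (hbd e heF rC hrC hre hEC).1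
    · rintro (rfl | ⟨⟨h1, _⟩, h2⟩)
      · exact ⟨heCF, hrCe⟩
      · exact ⟨h1, h2⟩
  have heCnotin : eC ∉ {e ∈ F ∩ EC | rC ∈ e} := by
    rintro ⟨⟨_, h⟩, _⟩; exact heCnotEC h
  have hrCcard : {e ∈ F | rC ∈ e}.ncard = {e ∈ F ∩ EC | rC ∈ e}.ncard + 1 := by
    rw [hrCdec, Set.ncard_insert_of_notMem heCnotin (Set.toFinite _)]
  -- degree sets for v ∈ C, v ≠ rC
  have hvdec : ∀ v ∈ C, v ≠ rC → {e ∈ F | v ∈ e} = {e ∈ F ∩ EC | v ∈ e} := by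
    intro v hvC hvr
    ext e
    simp only [Set.mem_setOf_eq, Set.mem_inter_iff]
    constructor
    · rintro ⟨heF, hve⟩
      refine ⟨⟨heF, ?_⟩, hve⟩
      by_contra hEC
      exact hvr (hbd e heF v hvC hve hEC).2
    · rintro ⟨⟨h1, _⟩, h2⟩; exact ⟨h1, h2⟩
  -- rC ∉ T ↔ Odd (inner degree at rC)
  have hrT : rC ∉ T ↔ Odd {e ∈ F ∩ EC | rC ∈ e}.ncard := by
    rw [hFdeg rC, hrCcard, Nat.odd_add_one, not_not]
  constructor
  · constructor
    · exact Set.inter_subset_right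
    · intro v
      rw [hTnew v]
      by_cases hvC : v ∈ C
      · by_cases hvr : v = rC
        · subst hvr
          simp only [ne_eq, not_true_eq_false, and_false, false_and, false_or, true_and]
          exact hrT
        · rw [← hvdec v hvC hvr, ← hFdeg v]
          simp [hvC, hvr, fun h : v = rC => hvr h]
      · have hvr : v ≠ rC := fun h => hvC (h ▸ hrC)
        have : {e ∈ F ∩ EC | v ∈ e} = ∅ := by
          ext e
          simp only [Set.mem_setOf_eq, Set.mem_inter_iff, Set.mem_empty_iff_false, iff_false]
          rintro ⟨⟨_, hEC⟩, hve⟩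
          exact hvC (hECmem e hEC v hve)
        rw [this]
        simp [hvC, hvr]
  · intro F' hF'
    obtain ⟨hF'sub, hF'deg⟩ := hF'
    -- build the modified join on G
    set F'' := F' ∪ (F \ EC) with hF''def
    have hdisj : Disjoint F' (F \ EC) := by
      rw [Set.disjoint_left]
      intro e he1 he2
      exact he2.2 (hF'sub he1)
    have hsplit : ∀ v : V, {e ∈ F'' | v ∈ e} = {e ∈ F' | v ∈ e} ∪ {e ∈ F \ EC | v ∈ e} := by
      intro v
      ext e
      simp only [hF''def, Set.mem_setOf_eq, Set.mem_union]
      tauto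
    have hF'empty : ∀ v : V, v ∉ C → {e ∈ F' | v ∈ e} = ∅ := by
      intro v hvC
      ext e
      simp only [Set.mem_setOf_eq, Set.mem_empty_iff_false, iff_false]
      rintro ⟨heF', hve⟩
      exact hvC (hECmem e (hF'sub heF') v hve)
    have hJoin : IsJoin G T F'' := by
      constructor
      · intro e he
        rcases he with he | he
        · exact hECsub (hF'sub he)
        · exact hFsub he.1
      · intro v
        rw [hsplit v]
        by_cases hvC : v ∈ C
        · by_cases hvr : v = rC
          · subst hvr
            have h2 : {e ∈ F \ EC | v ∈ e} = {eC} := by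
              ext e
              simp only [Set.mem_setOf_eq, Set.mem_diff, Set.mem_singleton_iff]
              constructor
              · rintro ⟨⟨heF, hEC⟩, hre⟩
                exact (hbd e heF v hrC hre hEC).1
              · rintro rfl
                exact ⟨⟨heCF, heCnotEC⟩, hrCe⟩
            rw [h2]
            have hnotin : eC ∉ {e ∈ F' | v ∈ e} := by
              rintro ⟨heF', _⟩
              exact heCnotEC (hF'sub heF')
            rw [Set.union_singleton, Set.ncard_insert_of_notMem hnotin (Set.toFinite _),
              Nat.odd_add_one, ← hF'deg v, hTnew v]
            simp only [ne_eq, not_true_eq_false, and_false, false_and, false_or, true_and]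
            tauto
          · have h2 : {e ∈ F \ EC | v ∈ e} = ∅ := by
              ext e
              simp only [Set.mem_setOf_eq, Set.mem_diff, Set.mem_empty_iff_false, iff_false]
              rintro ⟨⟨heF, hEC⟩, hve⟩
              exact hvr (hbd e heF v hvC hve hEC).2
            rw [h2, Set.union_empty, ← hF'deg v, hTnew v]
            simp [hvC, hvr]
        · rw [hF'empty v hvC, Set.empty_union]
          have h2 : {e ∈ F \ EC | v ∈ e} = {e ∈ F | v ∈ e} := by
            ext e
            simp only [Set.mem_setOf_eq, Set.mem_diff]
            constructor
            · rintro ⟨⟨heF, _⟩, hve⟩; exact ⟨heF, hve⟩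
            · rintro ⟨heF, hve⟩
              refine ⟨⟨heF, fun hEC => hvC (hECmem e hEC v hve)⟩, hve⟩
          rw [h2]
          exact hFdeg v
    have hle := hFmin F'' hJoin
    have hFcard : (F ∩ EC).ncard + (F \ EC).ncard = F.ncard :=
      Set.ncard_inter_add_ncard_diff_eq_ncard F EC (Set.toFinite F)
    have hF''card : F''.ncard = F'.ncard + (F \ EC).ncard :=
      Set.ncard_union_eq hdisj (Set.toFinite _) (Set.toFinite _)
    omega
end

section
/- Let (G,T) be a graft, let F be a minimum join of (G,T), and let X ⊆ V(G) be an F-combic set. Then for every connected component C of G − X with |V(C) ∩ T| even, the set F ∩ E(C) is a minimum join of the graft (C, T ∩ V(C)). -/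
open scoped Classical

variable {V : Type*}

/-- If `X` is `F`-combic and `C` is an even component of `G − X`, then
`F ∩ E(C)` is a minimum join of the graft `(C, T ∩ V(C))`. -/
theorem stmt_1 [Fintype V] (G : SimpleGraph V) (T : Set V) (F : Set (Sym2 V)) (X : Set V)
    (hGT : IsGraft G T) (hF : IsMinJoin G T F) (hX : IsCombic G T F X) :
    ∀ C : Set V, IsCompOf G X C → Even (C ∩ T).ncard →
      IsMinJoin (gRestrict G C) (T ∩ C) (F ∩ (gRestrict G C).edgeSet) := by
  intro C hC hEven
  have hbd : edgeBoundary G C ∩ F = ∅ := hX.2.2 C hC hEven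
  have hFsub : F ⊆ G.edgeSet := hF.1.1
  set EC := (gRestrict G C).edgeSet with hEC
  -- every edge of EC has both ends in C
  have fact2 : ∀ e ∈ EC, ∀ v ∈ e, v ∈ C := by
    intro e he
    induction e using Sym2.inductionOn with
    | hf a b =>
      obtain ⟨hab, haC, hbC⟩ := (SimpleGraph.mem_edgeSet _).mp he
      intro v hv
      rcases Sym2.mem_iff.mp hv with rfl | rfl
      · exact haC
      · exact hbC
  have hECsub : EC ⊆ G.edgeSet := by
    intro e he
    induction e using Sym2.inductionOn with
    | hf a b => exact (SimpleGraph.mem_edgeSet _).mpr ((SimpleGraph.mem_edgeSet _).mp he).1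
  -- no F-edge leaves C
  have key : ∀ x y : V, G.Adj x y → s(x, y) ∈ F → x ∈ C → y ∈ C := by
    intro x y hxy hxF hxC
    by_contra hy
    have : s(x, y) ∈ edgeBoundary G C ∩ F :=
      ⟨⟨(SimpleGraph.mem_edgeSet _).mpr hxy, x, y, rfl, hxC, hy⟩, hxF⟩
    rw [hbd] at this
    exact this
  -- every edge of F with an end in C is in EC
  have fact1 : ∀ e ∈ F, ∀ v ∈ e, v ∈ C → e ∈ EC := by
    intro e he
    induction e using Sym2.inductionOn with
    | hf a b =>
      intro v hv hvC
      have hab : G.Adj a b := hFsub he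
      rcases Sym2.mem_iff.mp hv with rfl | rfl
      · exact (SimpleGraph.mem_edgeSet _).mpr ⟨hab, hvC, key v b hab he hvC⟩
      · have haC : a ∈ C := key v a hab.symm (by rwa [Sym2.eq_swap]) hvC
        exact (SimpleGraph.mem_edgeSet _).mpr ⟨hab, haC, hvC⟩
  -- incident-edge sets agree
  have hsame : ∀ v ∈ C, {e ∈ F ∩ EC | v ∈ e} = {e ∈ F | v ∈ e} := by
    intro v hvC
    ext e
    constructor
    · rintro ⟨⟨heF, _⟩, hve⟩; exact ⟨heF, hve⟩
    · rintro ⟨heF, hve⟩; exact ⟨⟨heF, fact1 e heF v hve hvC⟩, hve⟩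
  have hempty : ∀ v : V, v ∉ C → {e ∈ F ∩ EC | v ∈ e} = ∅ := by
    intro v hvC
    ext e
    simp only [Set.mem_setOf_eq, Set.mem_empty_iff_false, iff_false]
    rintro ⟨⟨_, heEC⟩, hve⟩
    exact hvC (fact2 e heEC v hve)
  have hJoinC : IsJoin (gRestrict G C) (T ∩ C) (F ∩ EC) := by
    constructor
    · exact Set.inter_subset_right
    · intro v
      by_cases hvC : v ∈ C
      · rw [hsame v hvC]
        constructor
        · rintro ⟨hvT, _⟩; exact (hF.1.2 v).mp hvT
        · intro h; exact ⟨(hF.1.2 v).mpr h, hvC⟩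
      · rw [hempty v hvC]
        simp only [Set.ncard_empty]
        constructor
        · rintro ⟨_, h⟩; exact absurd h hvC
        · intro h; exact absurd h (by simp [Nat.odd_iff])
  refine ⟨hJoinC, ?_⟩
  intro F' hF'
  -- build the modified join on G
  set F2 : Set (Sym2 V) := (F \ EC) ∪ F' with hF2
  have hF'sub : F' ⊆ EC := hF'.1
  have hF2join : IsJoin G T F2 := by
    constructor
    · intro e he
      rcases he with he | he
      · exact hFsub he.1
      · exact hECsub (hF'sub he)
    · intro v
      by_cases hvC : v ∈ C
      · have h1 : {e ∈ F2 | v ∈ e} = {e ∈ F' | v ∈ e} := by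
          ext e
          simp only [hF2, Set.mem_setOf_eq, Set.mem_union, Set.mem_diff]
          constructor
          · rintro ⟨he, hve⟩
            rcases he with ⟨heF, heEC⟩ | heF'
            · exact absurd (fact1 e heF v hve hvC) heEC
            · exact ⟨heF', hve⟩
          · rintro ⟨heF', hve⟩; exact ⟨Or.inr heF', hve⟩
        rw [h1]
        constructor
        · intro hvT; exact (hF'.2 v).mp ⟨hvT, hvC⟩
        · intro h; exact ((hF'.2 v).mpr h).1
      · have h1 : {e ∈ F2 | v ∈ e} = {e ∈ F | v ∈ e} := by
          ext e
          simp only [hF2, Set.mem_setOf_eq, Set.mem_union, Set.mem_diff]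
          constructor
          · rintro ⟨he, hve⟩
            rcases he with ⟨heF, _⟩ | heF'
            · exact ⟨heF, hve⟩
            · exact absurd (fact2 e (hF'sub heF') v hve) hvC
          · rintro ⟨heF, hve⟩
            refine ⟨Or.inl ⟨heF, fun heEC => hvC (fact2 e heEC v hve)⟩, hve⟩
        rw [h1]
        exact hF.1.2 v
  have hmin : F.ncard ≤ F2.ncard := hF.2 F2 hF2join
  have hdiff : F \ EC = F \ (F ∩ EC) := by
    ext e; simp only [Set.mem_diff, Set.mem_inter_iff]; tauto
  have hsplit : (F \ (F ∩ EC)).ncard + (F ∩ EC).ncard = F.ncard :=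
    Set.ncard_diff_add_ncard_of_subset Set.inter_subset_left (Set.toFinite F)
  have hle : F2.ncard ≤ (F \ EC).ncard + F'.ncard := Set.ncard_union_le _ _
  rw [hdiff] at hle
  omega
end

section
/- Let (G,T) be a graft that is primal with respect to r ∈ V(G), and let F be a minimum join of (G,T). Let r' ∈ A(r) with r' ≠ r, and let P be an F-shortest path between r and r'. Then F Δ E(P) is a minimum join of the graft (G, T Δ {r, r'}); moreover, for every x ∈ V(G), the F-distance of x from r in (G,T) equals the (F Δ E(P))-distance of x from r' in (G, T Δ {r, r'}). Consequently, (G, T Δ {r, r'}) is primal with respect to r', and its sets A(r') and D(r') (computed in (G, T Δ {r,r'}) with respect to F Δ E(P)) equal A(r) and D(r) of (G,T), respectively. -/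
open scoped Classical

variable {V : Type*}

noncomputable def ewt (F : Set (Sym2 V)) (e : Sym2 V) : ℤ := if e ∈ F then -1 else 1

lemma list_wt (F : Set (Sym2 V)) (l : List (Sym2 V)) :
    ((l.filter fun e => e ∉ F).length : ℤ) - ((l.filter fun e => e ∈ F).length : ℤ)
      = (l.map (ewt F)).sum := by
  induction l with
  | nil => simp
  | cons a l ih =>
    by_cases h : a ∈ F <;>
      simp only [List.filter_cons, List.map_cons, List.sum_cons] <;>
        simp [h, ewt] at ih ⊢ <;> push_cast <;> omega

lemma walkWeight_eq_sum {G : SimpleGraph V} (F : Set (Sym2 V)) {x y : V} (p : G.Walk x y) :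
    walkWeight F p = (p.edges.map (ewt F)).sum := list_wt F p.edges

lemma ewt_bound (F : Set (Sym2 V)) (e : Sym2 V) : -1 ≤ ewt F e ∧ ewt F e ≤ 1 := by
  unfold ewt; split <;> omega

lemma walkWeight_ge {G : SimpleGraph V} (F : Set (Sym2 V)) {x y : V} (p : G.Walk x y) :
    -(p.length : ℤ) ≤ walkWeight F p := by
  rw [walkWeight_eq_sum]
  have : ∀ l : List (Sym2 V), -(l.length : ℤ) ≤ (l.map (ewt F)).sum := by
    intro l
    induction l with
    | nil => simp
    | cons a l ih =>
      simp only [List.map_cons, List.sum_cons, List.length_cons]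
      have := ewt_bound F a
      push_cast
      omega
  simpa [SimpleGraph.Walk.length_edges] using this p.edges

noncomputable def swt (F : Set (Sym2 V)) (S : Finset (Sym2 V)) : ℤ := ∑ e ∈ S, ewt F e

noncomputable def sdeg (S : Finset (Sym2 V)) (v : V) : ℕ := (S.filter fun e => v ∈ e).card

lemma swt_sdiff_add {F : Set (Sym2 V)} {S T : Finset (Sym2 V)} (h : T ⊆ S) :
    swt F (S \ T) + swt F T = swt F S := Finset.sum_sdiff h

lemma sdeg_sdiff_add {S T : Finset (Sym2 V)} (h : T ⊆ S) (v : V) :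
    sdeg (S \ T) v + sdeg T v = sdeg S v := by
  unfold sdeg
  rw [← Finset.card_union_of_disjoint
      (Finset.disjoint_filter_filter Finset.sdiff_disjoint),
    ← Finset.filter_union, Finset.sdiff_union_of_subset h]

lemma sdeg_singleton (e : Sym2 V) (v : V) :
    sdeg {e} v = if v ∈ e then 1 else 0 := by
  unfold sdeg
  rw [Finset.filter_singleton]
  split <;> simp

lemma sdeg_erase {S : Finset (Sym2 V)} {e : Sym2 V} (he : e ∈ S) (v : V) :
    sdeg (S.erase e) v = if v ∈ e then sdeg S v - 1 else sdeg S v := by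
  have h1 : sdeg (S \ {e}) v + sdeg {e} v = sdeg S v :=
    sdeg_sdiff_add (Finset.singleton_subset_iff.2 he) v
  rw [Finset.erase_eq]
  rw [sdeg_singleton] at h1
  split <;> rename_i h <;> simp [h] at h1 <;> omega

lemma sdeg_pos_exists {S : Finset (Sym2 V)} {v : V} (h : 0 < sdeg S v) :
    ∃ e ∈ S, v ∈ e := by
  unfold sdeg at h
  rw [Finset.card_pos] at h
  obtain ⟨e, he⟩ := h
  simp only [Finset.mem_filter] at he
  exact ⟨e, he.1, he.2⟩

lemma sum_toFinset_of_nodup {α β : Type*} [DecidableEq α] [AddCommMonoid β] (f : α → β) :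
    ∀ {l : List α}, l.Nodup → ∑ e ∈ l.toFinset, f e = (l.map f).sum
  | [], _ => by simp
  | a :: l, h => by
    simp only [List.toFinset_cons, List.map_cons, List.sum_cons]
    rw [Finset.sum_insert (by simpa using (List.nodup_cons.1 h).1),
      sum_toFinset_of_nodup f (List.nodup_cons.1 h).2]

lemma swt_eq_walkWeight {G : SimpleGraph V} (F : Set (Sym2 V)) {x y : V} {p : G.Walk x y}
    (hp : p.edges.Nodup) : swt F p.edges.toFinset = walkWeight F p := by
  rw [walkWeight_eq_sum]
  exact sum_toFinset_of_nodup _ hp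

lemma sdeg_toFinset_countP {l : List (Sym2 V)} (hl : l.Nodup) (v : V) :
    sdeg l.toFinset v = l.countP fun e => v ∈ e := by
  unfold sdeg
  rw [List.countP_eq_length_filter, ← List.toFinset_card_of_nodup (hl.filter _),
    List.toFinset_filter]
  congr 1
  simp

lemma odd_sdeg_path {G : SimpleGraph V} {a b : V} {p : G.Walk a b} (hp : p.IsTrail) (v : V) :
    Odd (sdeg p.edges.toFinset v) ↔ a ≠ b ∧ (v = a ∨ v = b) := by
  rw [sdeg_toFinset_countP hp.edges_nodup, Nat.not_even_iff_odd.symm,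
    hp.even_countP_edges_iff v]
  push_neg
  constructor
  · rintro ⟨hab, hv⟩
    by_cases h : v = a
    · exact ⟨hab, Or.inl h⟩
    · exact ⟨hab, Or.inr (hv h)⟩
  · rintro ⟨hab, hv⟩
    refine ⟨hab, fun h => ?_⟩
    rcases hv with rfl | rfl
    · exact absurd rfl h
    · rfl

lemma odd_ncard_symmDiff {α : Type*} (A B : Set α) (hA : A.Finite) (hB : B.Finite) :
    Odd (symmDiff A B).ncard ↔ (Odd A.ncard ↔ ¬ Odd B.ncard) := by
  have hsd : symmDiff A B = (A \ B) ∪ (B \ A) := by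
    rw [Set.symmDiff_def]
  have hd : Disjoint (A \ B) (B \ A) := disjoint_sdiff_sdiff
  have h1 : (symmDiff A B).ncard = (A \ B).ncard + (B \ A).ncard := by
    rw [hsd, Set.ncard_union_eq hd hA.diff hB.diff]
  have h2 : (A ∩ B).ncard + (A \ B).ncard = A.ncard :=
    Set.ncard_inter_add_ncard_diff_eq_ncard A B hA
  have h3 : (B ∩ A).ncard + (B \ A).ncard = B.ncard :=
    Set.ncard_inter_add_ncard_diff_eq_ncard B A hB
  have h4 : (A ∩ B).ncard = (B ∩ A).ncard := by rw [Set.inter_comm]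
  rw [h1, Nat.odd_iff, Nat.odd_iff, Nat.odd_iff]
  omega

lemma filter_symmDiff {α : Type*} (A B : Set α) (q : α → Prop) :
    {e ∈ symmDiff A B | q e} = symmDiff {e ∈ A | q e} {e ∈ B | q e} := by
  ext e
  simp only [Set.mem_setOf_eq, Set.mem_symmDiff]
  tauto

lemma odd_ncard_filter_symmDiff {α : Type*} (A B : Set α) (hA : A.Finite) (hB : B.Finite)
    (q : α → Prop) :
    Odd {e ∈ symmDiff A B | q e}.ncard ↔
      (Odd {e ∈ A | q e}.ncard ↔ ¬ Odd {e ∈ B | q e}.ncard) := by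
  rw [filter_symmDiff]
  exact odd_ncard_symmDiff _ _ (hA.subset (Set.sep_subset _ _)) (hB.subset (Set.sep_subset _ _))

lemma sdeg_eq_ncard (S : Finset (Sym2 V)) (v : V) :
    {e ∈ (↑S : Set (Sym2 V)) | v ∈ e}.ncard = sdeg S v := by
  unfold sdeg
  rw [← Set.ncard_coe_finset]
  congr 1
  ext e
  simp

section FinV
variable [Fintype V]

lemma IsJoin.symmDiff_edges {G : SimpleGraph V} {T : Set V} {F : Set (Sym2 V)}
    (hF : IsJoin G T F) (E : Set (Sym2 V)) (hE : E ⊆ G.edgeSet) (W : Set V)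
    (hW : ∀ v, Odd {e ∈ E | v ∈ e}.ncard ↔ v ∈ W) :
    IsJoin G (symmDiff T W) (symmDiff F E) := by
  constructor
  · intro e he
    rw [Set.mem_symmDiff] at he
    rcases he with ⟨h, _⟩ | ⟨h, _⟩
    · exact hF.1 h
    · exact hE h
  · intro v
    rw [Set.mem_symmDiff,
      odd_ncard_filter_symmDiff _ _ (Set.toFinite F) (Set.toFinite E)]
    have h1 := hF.2 v
    have h2 := hW v
    tauto

lemma swt_eq_ncard (F : Set (Sym2 V)) (S : Finset (Sym2 V)) :
    swt F S = (((S : Set (Sym2 V)) \ F).ncard : ℤ) - (((S : Set (Sym2 V)) ∩ F).ncard : ℤ) := by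
  unfold swt ewt
  rw [Finset.sum_ite, Finset.sum_const, Finset.sum_const]
  have h1 : ((S : Set (Sym2 V)) ∩ F).ncard = (S.filter (fun e => e ∈ F)).card := by
    rw [← Set.ncard_coe_finset]
    congr 1
    ext e
    simp
  have h2 : ((S : Set (Sym2 V)) \ F).ncard = (S.filter (fun e => ¬ e ∈ F)).card := by
    rw [← Set.ncard_coe_finset]
    congr 1
    ext e
    simp
  rw [h1, h2]
  push_cast
  ring

lemma ncard_symmDiff_int (F E : Set (Sym2 V)) :
    ((symmDiff F E).ncard : ℤ) = (F.ncard : ℤ) + ((E \ F).ncard : ℤ) - ((E ∩ F).ncard : ℤ) := by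
  have h1 : (symmDiff F E).ncard = (F \ E).ncard + (E \ F).ncard := by
    rw [Set.symmDiff_def]
    exact Set.ncard_union_eq disjoint_sdiff_sdiff (Set.toFinite _) (Set.toFinite _)
  have h2 : (F ∩ E).ncard + (F \ E).ncard = F.ncard :=
    Set.ncard_inter_add_ncard_diff_eq_ncard F E (Set.toFinite _)
  have h3 : (F ∩ E).ncard = (E ∩ F).ncard := by rw [Set.inter_comm]
  omega

lemma ncard_symmDiff_swt (F : Set (Sym2 V)) (S : Finset (Sym2 V)) :
    ((symmDiff F ↑S).ncard : ℤ) = (F.ncard : ℤ) + swt F S := by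
  rw [ncard_symmDiff_int, swt_eq_ncard]
  ring

lemma cycles_nonneg {G : SimpleGraph V} {T : Set V} {F : Set (Sym2 V)}
    (hF : IsMinJoin G T F) {v : V} (c : G.Walk v v) (hc : c.IsCycle) :
    0 ≤ walkWeight F c := by
  by_contra hlt
  push_neg at hlt
  set E : Set (Sym2 V) := ↑c.edges.toFinset with hE
  have hEsub : E ⊆ G.edgeSet := by
    intro e he
    rw [hE, Finset.mem_coe, List.mem_toFinset] at he
    exact c.edges_subset_edgeSet he
  have hparity : ∀ w, Odd {e ∈ E | w ∈ e}.ncard ↔ w ∈ (∅ : Set V) := by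
    intro w
    rw [hE, sdeg_eq_ncard, odd_sdeg_path hc.isTrail w]
    simp
  have hjoin := hF.1.symmDiff_edges E hEsub ∅ hparity
  rw [show (∅ : Set V) = (⊥ : Set V) from rfl, symmDiff_bot] at hjoin
  have hle := hF.2 _ hjoin
  have hcard : ((symmDiff F E).ncard : ℤ) = (F.ncard : ℤ) + walkWeight F c := by
    rw [hE, ncard_symmDiff_swt, swt_eq_walkWeight F hc.isTrail.edges_nodup]
  omega

end FinV

section FinV2
variable [Fintype V]

lemma leftover_even {G : SimpleGraph V} {S : Finset (Sym2 V)} {a b : V} (hab : a ≠ b)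
    (hodd : ∀ v, Odd (sdeg S v) ↔ (v = a ∨ v = b))
    {p : G.Walk a b} (hp : p.IsPath) (hsub : p.edges.toFinset ⊆ S) :
    ∀ v, ¬ Odd (sdeg (S \ p.edges.toFinset) v) := by
  intro v hcon
  have h1 := sdeg_sdiff_add hsub v
  have hE : Odd (sdeg p.edges.toFinset v) ↔ (v = a ∨ v = b) := by
    rw [odd_sdeg_path hp.isTrail v]
    simp [hab]
  have hS := hodd v
  by_cases hv : v = a ∨ v = b
  · have o1 := hS.2 hv
    have o2 := hE.2 hv
    rw [Nat.odd_iff] at o1 o2 hcon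
    omega
  · have o1 : ¬ Odd (sdeg S v) := fun h => hv (hS.1 h)
    have o2 : ¬ Odd (sdeg p.edges.toFinset v) := fun h => hv (hE.1 h)
    rw [Nat.odd_iff] at o1 o2 hcon
    omega

lemma extract_path (G : SimpleGraph V) :
    ∀ n (S : Finset (Sym2 V)), S.card ≤ n → (↑S : Set (Sym2 V)) ⊆ G.edgeSet →
      ∀ a b : V, a ≠ b → (∀ v, Odd (sdeg S v) ↔ (v = a ∨ v = b)) →
      ∃ p : G.Walk a b, p.IsPath ∧ p.edges.toFinset ⊆ S := by
  intro n
  induction n with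
  | zero =>
    intro S hcard hsub a b hab hodd
    exfalso
    have hodda := (hodd a).2 (Or.inl rfl)
    have hpos : 0 < sdeg S a :=
      Nat.pos_of_ne_zero (by intro h; rw [h] at hodda; simp at hodda)
    obtain ⟨e, heS, _⟩ := sdeg_pos_exists hpos
    have : 0 < S.card := Finset.card_pos.2 ⟨e, heS⟩
    omega
  | succ n ih =>
    intro S hcard hsub a b hab hodd
    have hodda := (hodd a).2 (Or.inl rfl)
    have hpos : 0 < sdeg S a :=
      Nat.pos_of_ne_zero (by intro h; rw [h] at hodda; simp at hodda)
    obtain ⟨e, heS, hae⟩ := sdeg_pos_exists hpos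
    obtain ⟨c, rfl⟩ := Sym2.mem_iff_exists.1 hae
    have hadj : G.Adj a c := (G.mem_edgeSet).1 (hsub heS)
    have hac : a ≠ c := hadj.ne
    have hcard' : (S.erase s(a, c)).card ≤ n := by
      have := Finset.card_erase_of_mem heS
      omega
    have hsub' : (↑(S.erase s(a, c)) : Set (Sym2 V)) ⊆ G.edgeSet := fun e he =>
      hsub (Finset.mem_coe.2 (Finset.erase_subset _ _ (Finset.mem_coe.1 he)))
    have hdeg := sdeg_erase heS
    have hcpos : 0 < sdeg S c := by
      have hm : s(a, c) ∈ S.filter (fun e => c ∈ e) :=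
        Finset.mem_filter.2 ⟨heS, by simp⟩
      exact Finset.card_pos.2 ⟨_, hm⟩
    by_cases hcb : c = b
    · subst hcb
      refine ⟨SimpleGraph.Walk.cons hadj SimpleGraph.Walk.nil, ?_, ?_⟩
      · rw [SimpleGraph.Walk.cons_isPath_iff]
        exact ⟨SimpleGraph.Walk.IsPath.nil, by simp [hab]⟩
      · intro e he
        simp only [SimpleGraph.Walk.edges_cons, SimpleGraph.Walk.edges_nil,
          List.toFinset_cons, List.toFinset_nil, Finset.mem_insert, Finset.notMem_empty,
          or_false] at he
        rw [he]
        exact heS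
    · have hodd' : ∀ v, Odd (sdeg (S.erase s(a, c)) v) ↔ (v = c ∨ v = b) := by
        intro v
        rw [hdeg v]
        rcases eq_or_ne v a with rfl | hva
        · rw [if_pos (by simp)]
          have h1 := Nat.odd_iff.1 hodda
          have h2 : ¬ Odd (sdeg S v - 1) := by rw [Nat.odd_iff]; omega
          simp [h2, hac, hab]
        · rcases eq_or_ne v c with rfl | hvc
          · rw [if_pos (by simp)]
            have h2 : ¬ Odd (sdeg S v) := by
              rw [hodd v]
              push_neg
              exact ⟨fun h => hac h.symm, hcb⟩
            rw [Nat.odd_iff] at h2 ⊢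
            simp only [true_or, iff_true]
            omega
          · rw [if_neg (by simp [Sym2.mem_iff, hva, hvc])]
            rw [hodd v]
            simp [hva, hvc]
      obtain ⟨p', hp', hp'sub⟩ := ih (S.erase s(a, c)) hcard' hsub' c b hcb hodd'
      by_cases haP : a ∈ p'.support
      · refine ⟨p'.dropUntil a haP, hp'.dropUntil haP, ?_⟩
        intro e he
        rw [List.mem_toFinset] at he
        have : e ∈ p'.edges := SimpleGraph.Walk.edges_dropUntil_subset p' haP he
        exact Finset.erase_subset _ _ (hp'sub (List.mem_toFinset.2 this))
      · refine ⟨SimpleGraph.Walk.cons hadj p', ?_, ?_⟩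
        · rw [SimpleGraph.Walk.cons_isPath_iff]
          exact ⟨hp', haP⟩
        · intro e he
          simp only [SimpleGraph.Walk.edges_cons, List.toFinset_cons, Finset.mem_insert] at he
          rcases he with rfl | he
          · exact heS
          · exact Finset.erase_subset _ _ (hp'sub he)

end FinV2

section FinV3
variable [Fintype V]

lemma even_nonneg (G : SimpleGraph V) (F : Set (Sym2 V))
    (hcons : ∀ (v : V) (c : G.Walk v v), c.IsCycle → 0 ≤ walkWeight F c) :
    ∀ n (S : Finset (Sym2 V)), S.card ≤ n → (↑S : Set (Sym2 V)) ⊆ G.edgeSet →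
      (∀ v, ¬ Odd (sdeg S v)) → 0 ≤ swt F S := by
  intro n
  induction n with
  | zero =>
    intro S hcard _ _
    have hS : S = ∅ := Finset.card_eq_zero.1 (Nat.le_zero.1 hcard)
    simp [hS, swt]
  | succ n ih =>
    intro S hcard hsub heven
    rcases Finset.eq_empty_or_nonempty S with rfl | ⟨e, heS⟩
    · simp [swt]
    · revert heS
      induction e using Sym2.inductionOn with
      | hf u w =>
        intro heS
        have hadj : G.Adj u w := (G.mem_edgeSet).1 (hsub heS)
        have huw : u ≠ w := hadj.ne
        have hdeg := sdeg_erase heS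
        have hupos : 0 < sdeg S u :=
          Finset.card_pos.2 ⟨s(u, w), Finset.mem_filter.2 ⟨heS, by simp⟩⟩
        have hwpos : 0 < sdeg S w :=
          Finset.card_pos.2 ⟨s(u, w), Finset.mem_filter.2 ⟨heS, by simp⟩⟩
        have hcard' : (S.erase s(u, w)).card ≤ n := by
          have := Finset.card_erase_of_mem heS
          omega
        have hsub' : (↑(S.erase s(u, w)) : Set (Sym2 V)) ⊆ G.edgeSet := fun e he =>
          hsub (Finset.mem_coe.2 (Finset.erase_subset _ _ (Finset.mem_coe.1 he)))
        have hodd' : ∀ v, Odd (sdeg (S.erase s(u, w)) v) ↔ (v = u ∨ v = w) := by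
          intro v
          rw [hdeg v]
          rcases eq_or_ne v u with rfl | hvu
          · rw [if_pos (by simp)]
            have h1 : ¬ Odd (sdeg S v) := heven v
            rw [Nat.odd_iff] at h1 ⊢
            simp only [true_or, iff_true]
            omega
          · rcases eq_or_ne v w with rfl | hvw
            · rw [if_pos (by simp)]
              have h1 : ¬ Odd (sdeg S v) := heven v
              rw [Nat.odd_iff] at h1 ⊢
              simp only [or_true, iff_true]
              omega
            · rw [if_neg (by simp [Sym2.mem_iff, hvu, hvw])]
              have h1 : ¬ Odd (sdeg S v) := heven v
              simp [h1, hvu, hvw]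
        obtain ⟨p, hp, hpsub⟩ :=
          extract_path G n (S.erase s(u, w)) hcard' hsub' u w huw hodd'
        have hcyc : (SimpleGraph.Walk.cons hadj.symm p).IsCycle := by
          rw [SimpleGraph.Walk.cons_isCycle_iff]
          refine ⟨hp, fun hmem => ?_⟩
          have : s(w, u) ∈ S.erase s(u, w) := hpsub (List.mem_toFinset.2 hmem)
          rw [Sym2.eq_swap] at this
          exact (Finset.notMem_erase _ _) this
        have hcw := hcons w (SimpleGraph.Walk.cons hadj.symm p) hcyc
        have hcwt : walkWeight F (SimpleGraph.Walk.cons hadj.symm p)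
            = ewt F s(w, u) + walkWeight F p := by
          rw [walkWeight_eq_sum, walkWeight_eq_sum, SimpleGraph.Walk.edges_cons,
            List.map_cons, List.sum_cons]
        have hleft : ∀ v, ¬ Odd (sdeg ((S.erase s(u, w)) \ p.edges.toFinset) v) :=
          leftover_even huw hodd' hp hpsub
        have hleftsub : (↑((S.erase s(u, w)) \ p.edges.toFinset) : Set (Sym2 V)) ⊆ G.edgeSet :=
          fun e he => hsub' (Finset.mem_coe.2 (Finset.sdiff_subset (Finset.mem_coe.1 he)))
        have hleftcard : ((S.erase s(u, w)) \ p.edges.toFinset).card ≤ n :=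
          le_trans (Finset.card_le_card Finset.sdiff_subset) hcard'
        have hih := ih _ hleftcard hleftsub hleft
        have e1 : swt F ((S.erase s(u, w)) \ p.edges.toFinset) + swt F p.edges.toFinset
            = swt F (S.erase s(u, w)) := swt_sdiff_add hpsub
        have e2 : swt F (S \ {s(u, w)}) + swt F {s(u, w)} = swt F S :=
          swt_sdiff_add (Finset.singleton_subset_iff.2 heS)
        have e3 : swt F {s(u, w)} = ewt F s(u, w) := Finset.sum_singleton _ _
        have e4 : swt F p.edges.toFinset = walkWeight F p :=
          swt_eq_walkWeight F hp.isTrail.edges_nodup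
        rw [← Finset.erase_eq] at e2
        have e5 : ewt F s(w, u) = ewt F s(u, w) := by rw [Sym2.eq_swap]
        omega

lemma odd_pair (G : SimpleGraph V) (F : Set (Sym2 V))
    (hcons : ∀ (v : V) (c : G.Walk v v), c.IsCycle → 0 ≤ walkWeight F c)
    (S : Finset (Sym2 V)) (hsub : (↑S : Set (Sym2 V)) ⊆ G.edgeSet)
    {a b : V} (hab : a ≠ b) (hodd : ∀ v, Odd (sdeg S v) ↔ (v = a ∨ v = b)) :
    ∃ p : G.Walk a b, p.IsPath ∧ walkWeight F p ≤ swt F S := by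
  obtain ⟨p, hp, hpsub⟩ := extract_path G S.card S le_rfl hsub a b hab hodd
  have hleft := leftover_even hab hodd hp hpsub
  have hleftsub : (↑(S \ p.edges.toFinset) : Set (Sym2 V)) ⊆ G.edgeSet :=
    fun e he => hsub (Finset.mem_coe.2 (Finset.sdiff_subset (Finset.mem_coe.1 he)))
  have hih := even_nonneg G F hcons _ _ le_rfl hleftsub hleft
  have e1 : swt F (S \ p.edges.toFinset) + swt F p.edges.toFinset = swt F S :=
    swt_sdiff_add hpsub
  have e4 : swt F p.edges.toFinset = walkWeight F p :=
    swt_eq_walkWeight F hp.isTrail.edges_nodup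
  exact ⟨p, hp, by omega⟩

end FinV3

lemma ewt_symmDiff_mem (F E : Set (Sym2 V)) {e : Sym2 V} (he : e ∈ E) :
    ewt (symmDiff F E) e = - ewt F e := by
  unfold ewt
  by_cases h : e ∈ F
  · rw [if_pos h, if_neg (by rw [Set.mem_symmDiff]; tauto)]; norm_num
  · rw [if_neg h, if_pos (by rw [Set.mem_symmDiff]; tauto)]

lemma ewt_symmDiff_not_mem (F E : Set (Sym2 V)) {e : Sym2 V} (he : e ∉ E) :
    ewt (symmDiff F E) e = ewt F e := by
  unfold ewt
  by_cases h : e ∈ F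
  · rw [if_pos h, if_pos (by rw [Set.mem_symmDiff]; tauto)]
  · rw [if_neg h, if_neg (by rw [Set.mem_symmDiff]; tauto)]

lemma map_sum_neg_aux {α : Type*} (f g : α → ℤ) :
    ∀ l : List α, (∀ e ∈ l, f e = - g e) → (l.map f).sum = - (l.map g).sum
  | [], _ => by simp
  | a :: l, h => by
    simp only [List.map_cons, List.sum_cons]
    rw [h a (by simp), map_sum_neg_aux f g l fun e he => h e (by simp [he])]
    ring

lemma walkWeight_flip {G : SimpleGraph V} (F E : Set (Sym2 V)) {x y : V} (p : G.Walk x y)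
    (hE : ∀ e ∈ p.edges, e ∈ E) :
    walkWeight (symmDiff F E) p = - walkWeight F p := by
  rw [walkWeight_eq_sum, walkWeight_eq_sum]
  exact map_sum_neg_aux _ _ _ fun e he => ewt_symmDiff_mem F E (hE e he)

lemma sdeg_union_disjoint {A B : Finset (Sym2 V)} (h : Disjoint A B) (v : V) :
    sdeg (A ∪ B) v = sdeg A v + sdeg B v := by
  unfold sdeg
  rw [Finset.filter_union, Finset.card_union_of_disjoint (Finset.disjoint_filter_filter h)]

lemma inter_sdiff_helper (A B : Finset (Sym2 V)) : A \ (A ∩ B) = A \ B := by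
  ext e
  simp only [Finset.mem_sdiff, Finset.mem_inter]
  tauto

lemma sdeg_inter_add (A B : Finset (Sym2 V)) (v : V) :
    sdeg (A \ B) v + sdeg (A ∩ B) v = sdeg A v := by
  rw [← inter_sdiff_helper A B]
  exact sdeg_sdiff_add Finset.inter_subset_left v

lemma swt_inter_add (F : Set (Sym2 V)) (A B : Finset (Sym2 V)) :
    swt F (A \ B) + swt F (A ∩ B) = swt F A := by
  rw [← inter_sdiff_helper A B]
  exact swt_sdiff_add Finset.inter_subset_left

lemma odd_sdeg_sd (A B : Finset (Sym2 V)) (v : V) :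
    Odd (sdeg ((A \ B) ∪ (B \ A)) v) ↔ (Odd (sdeg A v) ↔ ¬ Odd (sdeg B v)) := by
  rw [sdeg_union_disjoint disjoint_sdiff_sdiff]
  have h2 := sdeg_inter_add A B v
  have h3 := sdeg_inter_add B A v
  have h4 : A ∩ B = B ∩ A := Finset.inter_comm A B
  rw [h4] at h2
  rw [Nat.odd_iff, Nat.odd_iff, Nat.odd_iff]
  omega

lemma swt_symmDiff_flip (F : Set (Sym2 V)) (A B : Finset (Sym2 V)) :
    swt (symmDiff F ↑A) ((A \ B) ∪ (B \ A)) = swt F B - swt F A := by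
  unfold swt
  rw [Finset.sum_union disjoint_sdiff_sdiff]
  have h1 : ∑ e ∈ A \ B, ewt (symmDiff F ↑A) e = - ∑ e ∈ A \ B, ewt F e := by
    rw [← Finset.sum_neg_distrib]
    exact Finset.sum_congr rfl fun e he =>
      ewt_symmDiff_mem F _ (Finset.mem_coe.2 (Finset.mem_sdiff.1 he).1)
  have h2 : ∑ e ∈ B \ A, ewt (symmDiff F ↑A) e = ∑ e ∈ B \ A, ewt F e :=
    Finset.sum_congr rfl fun e he =>
      ewt_symmDiff_not_mem F _ (fun hc => (Finset.mem_sdiff.1 he).2 (Finset.mem_coe.1 hc))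
  rw [h1, h2]
  have h3 := swt_inter_add F A B
  have h4 := swt_inter_add F B A
  have h5 : A ∩ B = B ∩ A := Finset.inter_comm A B
  rw [h5] at h3
  unfold swt at h3 h4
  omega

section DistF
variable [Fintype V]

lemma distF_bddBelow (G : SimpleGraph V) (F : Set (Sym2 V)) (x y : V) :
    BddBelow {w : ℤ | ∃ p : G.Walk x y, p.IsPath ∧ walkWeight F p = w} := by
  refine ⟨-(Fintype.card V : ℤ), ?_⟩
  rintro w ⟨p, hp, rfl⟩
  have h1 := walkWeight_ge F p
  have h2 := hp.length_lt
  have : (p.length : ℤ) < (Fintype.card V : ℤ) := by exact_mod_cast h2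
  omega

lemma distF_le {G : SimpleGraph V} (F : Set (Sym2 V)) {x y : V} (p : G.Walk x y)
    (hp : p.IsPath) : distF G F x y ≤ walkWeight F p :=
  csInf_le (distF_bddBelow G F x y) ⟨p, hp, rfl⟩

lemma distF_exists {G : SimpleGraph V} (F : Set (Sym2 V)) {x y : V} (h : G.Reachable x y) :
    ∃ p : G.Walk x y, p.IsPath ∧ walkWeight F p = distF G F x y := by
  obtain ⟨q⟩ := h
  have hne : {w : ℤ | ∃ p : G.Walk x y, p.IsPath ∧ walkWeight F p = w}.Nonempty :=
    ⟨walkWeight F q.bypass, q.bypass, q.bypass_isPath, rfl⟩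
  have := Int.csInf_mem hne (distF_bddBelow G F x y)
  obtain ⟨p, hp, hw⟩ := this
  exact ⟨p, hp, hw⟩

lemma distF_empty {G : SimpleGraph V} (F : Set (Sym2 V)) {x y : V} (h : ¬ G.Reachable x y) :
    {w : ℤ | ∃ p : G.Walk x y, p.IsPath ∧ walkWeight F p = w} = ∅ := by
  ext w
  simp only [Set.mem_setOf_eq, Set.mem_empty_iff_false, iff_false]
  rintro ⟨p, _, _⟩
  exact h ⟨p⟩

end DistF

lemma walkWeight_nil {G : SimpleGraph V} (F : Set (Sym2 V)) {x : V} :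
    walkWeight F (SimpleGraph.Walk.nil : G.Walk x x) = 0 := by
  unfold walkWeight
  simp

lemma distF_self (G : SimpleGraph V) (F : Set (Sym2 V)) (x : V) : distF G F x x = 0 := by
  unfold distF
  have : {w : ℤ | ∃ p : G.Walk x x, p.IsPath ∧ walkWeight F p = w} = {0} := by
    ext w
    simp only [Set.mem_setOf_eq, Set.mem_singleton_iff]
    constructor
    · rintro ⟨p, hp, rfl⟩
      rw [SimpleGraph.Walk.isPath_iff_eq_nil.1 hp, walkWeight_nil]
    · rintro rfl
      exact ⟨SimpleGraph.Walk.nil, SimpleGraph.Walk.IsPath.nil, walkWeight_nil F⟩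
  rw [this, csInf_singleton]

lemma coe_edges_toFinset {G : SimpleGraph V} {x y : V} (p : G.Walk x y) :
    (↑p.edges.toFinset : Set (Sym2 V)) = {e | e ∈ p.edges} := by
  ext e; simp

lemma parity_logic1 {v r r' x : V} (hrr' : r ≠ r') (hxr' : x ≠ r') :
    ((r ≠ r' ∧ (v = r ∨ v = r')) ↔ ¬(r ≠ x ∧ (v = r ∨ v = x))) ↔ (v = r' ∨ v = x) := by
  rcases eq_or_ne v r with rfl | hvr
  · simp [hrr']
  · rcases eq_or_ne v r' with rfl | hvr'
    · simp [hrr', hrr'.symm, Ne.symm hxr']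
    · rcases eq_or_ne v x with rfl | hvx
      · simp [hvr, hvr', hrr', Ne.symm hvr]
      · simp [hvr, hvr', hvx]

lemma parity_logic2 {v r r' x : V} (hrr' : r ≠ r') (hxr' : x ≠ r') (hxr : x ≠ r) :
    ((r ≠ r' ∧ (v = r ∨ v = r')) ↔ ¬(r' ≠ x ∧ (v = r' ∨ v = x))) ↔ (v = r ∨ v = x) := by
  rcases eq_or_ne v r with rfl | hvr
  · simp [hrr', Ne.symm hxr, hrr'.symm, Ne.symm hxr']
  · rcases eq_or_ne v r' with rfl | hvr'
    · simp [hrr', hrr'.symm, Ne.symm hxr', Ne.symm hxr]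
    · rcases eq_or_ne v x with rfl | hvx
      · simp [hvr, hvr', Ne.symm hxr', hxr]
      · simp [hvr, hvr', hvx]

lemma parity_logic3 {v r r' : V} :
    ¬(((r ≠ r' ∧ (v = r ∨ v = r')) ↔ ¬(r' ≠ r ∧ (v = r' ∨ v = r)))) := by
  rcases eq_or_ne r r' with rfl | hrr'
  · simp
  · by_cases hv : v = r ∨ v = r'
    · simp [hrr', Ne.symm hrr', hv, or_comm.mp hv]
    · push_neg at hv
      simp [hv.1, hv.2, hrr']

section Main
variable [Fintype V]

lemma step_minjoin {G : SimpleGraph V} {T : Set V} {F : Set (Sym2 V)} {r r' : V}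
    (hF : IsMinJoin G T F) (hrr' : r ≠ r') (hd0 : distF G F r r' = 0)
    (P : G.Walk r r') (hP : P.IsPath) (hwP : walkWeight F P = 0) :
    IsMinJoin G (symmDiff T {r, r'}) (symmDiff F {e | e ∈ P.edges}) := by
  have hEPsub : {e | e ∈ P.edges} ⊆ G.edgeSet := fun e he => P.edges_subset_edgeSet he
  have hparity : ∀ v, Odd {e ∈ {e | e ∈ P.edges} | v ∈ e}.ncard ↔ v ∈ ({r, r'} : Set V) := by
    intro v
    rw [← coe_edges_toFinset P, sdeg_eq_ncard, odd_sdeg_path hP.isTrail]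
    simp [hrr']
  have hjoin := hF.1.symmDiff_edges _ hEPsub _ hparity
  refine ⟨hjoin, ?_⟩
  have hcard : ((symmDiff F {e | e ∈ P.edges}).ncard : ℤ) = (F.ncard : ℤ) := by
    rw [← coe_edges_toFinset P, ncard_symmDiff_swt,
      swt_eq_walkWeight F hP.isTrail.edges_nodup, hwP, add_zero]
  intro F'' hF''
  have hSfin := Set.toFinite (symmDiff F F'')
  set SF := hSfin.toFinset with hSF
  have hcoe : (↑SF : Set (Sym2 V)) = symmDiff F F'' := hSfin.coe_toFinset
  have hSsub : (↑SF : Set (Sym2 V)) ⊆ G.edgeSet := by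
    rw [hcoe]
    intro e he
    rw [Set.mem_symmDiff] at he
    rcases he with ⟨h, _⟩ | ⟨h, _⟩
    exacts [hF.1.1 h, hF''.1 h]
  have hSodd : ∀ v, Odd (sdeg SF v) ↔ (v = r ∨ v = r') := by
    intro v
    rw [← sdeg_eq_ncard, hcoe,
      odd_ncard_filter_symmDiff _ _ (Set.toFinite F) (Set.toFinite F'')]
    have h1 := hF.1.2 v
    have h2 := hF''.2 v
    have h3 : v ∈ symmDiff T {r, r'} ↔ ((v ∈ T) ↔ ¬(v = r ∨ v = r')) := by
      rw [Set.mem_symmDiff]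
      simp only [Set.mem_insert_iff, Set.mem_singleton_iff]
      tauto
    rw [h3] at h2
    tauto
  obtain ⟨q, hq, hqle⟩ :=
    odd_pair G F (fun v c hc => cycles_nonneg hF c hc) SF hSsub hrr' hSodd
  have h0le : (0 : ℤ) ≤ walkWeight F q := hd0 ▸ distF_le F q hq
  have hswt : swt F SF = (F''.ncard : ℤ) - (F.ncard : ℤ) := by
    rw [swt_eq_ncard, hcoe]
    have e1 : symmDiff F F'' \ F = F'' \ F := by
      ext e
      simp only [Set.mem_diff, Set.mem_symmDiff]
      tauto
    have e2 : symmDiff F F'' ∩ F = F \ F'' := by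
      ext e
      simp only [Set.mem_inter_iff, Set.mem_diff, Set.mem_symmDiff]
      tauto
    rw [e1, e2]
    have e3 := Set.ncard_inter_add_ncard_diff_eq_ncard F'' F (Set.toFinite _)
    have e4 := Set.ncard_inter_add_ncard_diff_eq_ncard F F'' (Set.toFinite _)
    have e5 : (F'' ∩ F).ncard = (F ∩ F'').ncard := by rw [Set.inter_comm]
    omega
  have hfinal : ((symmDiff F {e | e ∈ P.edges}).ncard : ℤ) ≤ (F''.ncard : ℤ) := by omega
  exact_mod_cast hfinal

lemma step_dist {G : SimpleGraph V} {T : Set V} {F : Set (Sym2 V)} {r r' : V}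
    {P : G.Walk r r'}
    (hF : IsMinJoin G T F)
    (hF' : IsMinJoin G (symmDiff T {r, r'}) (symmDiff F {e | e ∈ P.edges}))
    (hrr' : r ≠ r') (hd0 : distF G F r r' = 0)
    (hP : P.IsPath) (hwP : walkWeight F P = 0) (x : V) :
    distF G (symmDiff F {e | e ∈ P.edges}) r' x = distF G F r x := by
  set Es : Set (Sym2 V) := {e | e ∈ P.edges} with hEs
  set F' : Set (Sym2 V) := symmDiff F Es with hF'def
  have hconsF : ∀ (v : V) (c : G.Walk v v), c.IsCycle → 0 ≤ walkWeight F c :=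
    fun v c hc => cycles_nonneg hF c hc
  have hconsF' : ∀ (v : V) (c : G.Walk v v), c.IsCycle → 0 ≤ walkWeight F' c :=
    fun v c hc => cycles_nonneg hF' c hc
  have hwP' : walkWeight F' P = 0 := by
    rw [hF'def, walkWeight_flip F Es P (fun e he => he), hwP, neg_zero]
  have hFF' : symmDiff F' Es = F := by
    rw [hF'def]
    exact symmDiff_symmDiff_cancel_right Es F
  have hcoeEP : (↑P.edges.toFinset : Set (Sym2 V)) = Es := coe_edges_toFinset P
  by_cases hxr' : x = r'
  · subst hxr'
    rw [distF_self, hd0]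
  by_cases hreach : G.Reachable r x
  · -- direction ≤
    obtain ⟨R, hR, hRw⟩ := distF_exists F hreach
    have hle1 : distF G F' r' x ≤ distF G F r x := by
      set S1 := (P.edges.toFinset \ R.edges.toFinset) ∪
        (R.edges.toFinset \ P.edges.toFinset) with hS1
      have hS1sub : (↑S1 : Set (Sym2 V)) ⊆ G.edgeSet := by
        intro e he
        rw [hS1] at he
        simp only [Finset.coe_union, Set.mem_union, Finset.mem_coe, Finset.mem_sdiff,
          List.mem_toFinset] at he
        rcases he with ⟨h, _⟩ | ⟨h, _⟩
        exacts [P.edges_subset_edgeSet h, R.edges_subset_edgeSet h]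
      have hS1odd : ∀ v, Odd (sdeg S1 v) ↔ (v = r' ∨ v = x) := by
        intro v
        rw [hS1, odd_sdeg_sd, odd_sdeg_path hP.isTrail, odd_sdeg_path hR.isTrail]
        exact parity_logic1 hrr' hxr'
      obtain ⟨Q, hQ, hQle⟩ := odd_pair G F' hconsF' S1 hS1sub (Ne.symm hxr') hS1odd
      have hswt : swt F' S1 = walkWeight F R - walkWeight F P := by
        rw [hS1, hF'def, ← hcoeEP, swt_symmDiff_flip,
          swt_eq_walkWeight F hR.isTrail.edges_nodup,
          swt_eq_walkWeight F hP.isTrail.edges_nodup]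
      calc distF G F' r' x ≤ walkWeight F' Q := distF_le F' Q hQ
        _ ≤ swt F' S1 := hQle
        _ = walkWeight F R - walkWeight F P := hswt
        _ = distF G F r x := by rw [hRw, hwP]; ring
    -- direction ≥
    have hreach' : G.Reachable r' x := (SimpleGraph.Reachable.trans ⟨P.reverse⟩ hreach : G.Reachable r' x)
    obtain ⟨Q, hQ, hQw⟩ := distF_exists F' hreach'
    have hge1 : distF G F r x ≤ distF G F' r' x := by
      set S2 := (P.edges.toFinset \ Q.edges.toFinset) ∪
        (Q.edges.toFinset \ P.edges.toFinset) with hS2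
      have hS2sub : (↑S2 : Set (Sym2 V)) ⊆ G.edgeSet := by
        intro e he
        rw [hS2] at he
        simp only [Finset.coe_union, Set.mem_union, Finset.mem_coe, Finset.mem_sdiff,
          List.mem_toFinset] at he
        rcases he with ⟨h, _⟩ | ⟨h, _⟩
        exacts [P.edges_subset_edgeSet h, Q.edges_subset_edgeSet h]
      have hswt : swt F S2 = walkWeight F' Q - walkWeight F' P := by
        rw [hS2, ← hFF', ← hcoeEP, swt_symmDiff_flip,
          swt_eq_walkWeight F' hQ.isTrail.edges_nodup,
          swt_eq_walkWeight F' hP.isTrail.edges_nodup]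
      by_cases hxr : x = r
      · subst hxr
        have hS2even : ∀ v, ¬ Odd (sdeg S2 v) := by
          intro v
          rw [hS2, odd_sdeg_sd, odd_sdeg_path hP.isTrail, odd_sdeg_path hQ.isTrail]
          exact parity_logic3
        have h0 := even_nonneg G F hconsF S2.card S2 le_rfl hS2sub hS2even
        rw [distF_self]
        rw [hswt, hQw, hwP'] at h0
        omega
      · have hS2odd : ∀ v, Odd (sdeg S2 v) ↔ (v = r ∨ v = x) := by
          intro v
          rw [hS2, odd_sdeg_sd, odd_sdeg_path hP.isTrail, odd_sdeg_path hQ.isTrail]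
          exact parity_logic2 hrr' hxr' hxr
        obtain ⟨R', hR', hR'le⟩ :=
          odd_pair G F hconsF S2 hS2sub (fun h => hxr h.symm) hS2odd
        calc distF G F r x ≤ walkWeight F R' := distF_le F R' hR'
          _ ≤ swt F S2 := hR'le
          _ = walkWeight F' Q - walkWeight F' P := hswt
          _ = distF G F' r' x := by rw [hQw, hwP']; ring
    exact le_antisymm hle1 hge1
  · have hnreach' : ¬ G.Reachable r' x := fun h =>
      hreach (SimpleGraph.Reachable.trans (⟨P⟩ : G.Reachable r r') h)
    unfold distF
    rw [distF_empty F' hnreach', distF_empty F hreach]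

end Main

/-- For an `r`-primal graft `(G, T)` with minimum join `F` and
`r' ∈ A(r) ∖ {r}`, if `P` is an `F`-shortest path between `r` and `r'`, then
`F Δ E(P)` is a minimum join of `(G, T Δ {r, r'})`, the distances from `r'` with respect to
`F Δ E(P)` agree with the distances from `r` with respect to `F`, and consequently
`(G, T Δ {r, r'})` is `r'`-primal with the same sets `A` and `D`. -/
theorem stmt_2 [Fintype V] (G : SimpleGraph V) (T : Set V) (F : Set (Sym2 V)) (r r' : V)
    (hGT : IsGraft G T) (hF : IsMinJoin G T F)
    (hprimal : ∀ x : V, distF G F r x ≤ 0)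
    (hr' : distF G F r r' = 0) (hne : r' ≠ r)
    (P : G.Walk r r') (hP : P.IsPath) (hPsh : walkWeight F P = distF G F r r') :
    IsMinJoin G (symmDiff T {r, r'}) (symmDiff F {e | e ∈ P.edges}) ∧
    (∀ x : V, distF G (symmDiff F {e | e ∈ P.edges}) r' x = distF G F r x) ∧
    (∀ x : V, distF G (symmDiff F {e | e ∈ P.edges}) r' x ≤ 0) ∧
    {x : V | distF G (symmDiff F {e | e ∈ P.edges}) r' x = 0} = {x : V | distF G F r x = 0} ∧
    {x : V | distF G (symmDiff F {e | e ∈ P.edges}) r' x < 0} = {x : V | distF G F r x < 0} := by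
  have hrr' : r ≠ r' := hne.symm
  have hwP : walkWeight F P = 0 := by rw [hPsh, hr']
  have hmin' := step_minjoin hF hrr' hr' P hP hwP
  have hdist : ∀ x : V, distF G (symmDiff F {e | e ∈ P.edges}) r' x = distF G F r x :=
    fun x => step_dist hF hmin' hrr' hr' hP hwP x
  refine ⟨hmin', hdist, fun x => ?_, ?_, ?_⟩
  · rw [hdist x]
    exact hprimal x
  · ext x
    simp only [Set.mem_setOf_eq, hdist x]
  · ext x
    simp only [Set.mem_setOf_eq, hdist x]
end

section
/- Let (G,T) be a graft, let F be a minimum join, let X ⊆ V(G) be an extreme set, and let Y, Z ⊆ V(G) be disjoint sets with Y ∪ Z = V(G)∖X, such that no edge of G joins Y and Z, and F contains no edge with both ends in Z and no edge of δ_G(Z). Let (Ĝ, T̂) be a graft with V(Ĝ) ⊇ V(G), E(Ĝ) ⊇ E(G), T̂ = T, such that every edge of E(Ĝ)∖E(G) joins a vertex of X to a vertex of V(Ĝ)∖V(G). Let Ẑ = Z ∪ (V(Ĝ)∖V(G)). If Q is a path of Ĝ between a vertex y ∈ Y and a vertex of X with V(Q) ∩ Ẑ ≠ ∅, then w_F(Q)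 > min_{x∈X} d_F(x,y), where the distance is computed in G. -/
open scoped Classical

variable {V : Type*}

section Aux

open SimpleGraph

lemma walkWeight_cons' {G : SimpleGraph V} (F : Set (Sym2 V)) {x y z : V}
    (h : G.Adj x y) (p : G.Walk y z) :
    walkWeight F (SimpleGraph.Walk.cons h p) =
      (if s(x, y) ∈ F then (-1 : ℤ) else 1) + walkWeight F p := by
  by_cases he : s(x, y) ∈ F <;>
    simp [walkWeight, SimpleGraph.Walk.edges_cons, List.filter_cons, he] <;> ring

lemma walkWeight_append' {G : SimpleGraph V} (F : Set (Sym2 V)) {x y z : V}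
    (p : G.Walk x y) (q : G.Walk y z) :
    walkWeight F (p.append q) = walkWeight F p + walkWeight F q := by
  simp only [walkWeight, SimpleGraph.Walk.edges_append, List.filter_append,
    List.length_append]
  push_cast
  ring

lemma walkWeight_reverse' {G : SimpleGraph V} (F : Set (Sym2 V)) {x y : V}
    (p : G.Walk x y) :
    walkWeight F p.reverse = walkWeight F p := by
  simp [walkWeight, SimpleGraph.Walk.edges_reverse, List.filter_reverse]

lemma walkWeight_transfer' {G H : SimpleGraph V} (F : Set (Sym2 V)) {x y : V}
    (p : G.Walk x y) (hp : ∀ e ∈ p.edges, e ∈ H.edgeSet) :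
    walkWeight F (p.transfer H hp) = walkWeight F p := by
  simp [walkWeight, SimpleGraph.Walk.edges_transfer]

lemma distF_le_walkWeight' [Fintype V] {G : SimpleGraph V} (F : Set (Sym2 V)) {x y : V}
    (p : G.Walk x y) (hp : p.IsPath) : distF G F x y ≤ walkWeight F p := by
  classical
  have hfin : {w : ℤ | ∃ p : G.Walk x y, p.IsPath ∧ walkWeight F p = w}.Finite := by
    apply (Set.finite_range (fun q : {p : G.Walk x y // p.IsPath} => walkWeight F q.1)).subset
    rintro w ⟨p, hp, rfl⟩
    exact ⟨⟨p, hp⟩, rfl⟩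
  exact csInf_le hfin.bddBelow ⟨p, hp, rfl⟩

lemma minDistX_le_distF' [Fintype V] {G : SimpleGraph V} (F : Set (Sym2 V)) {X : Set V}
    {u y : V} (hu : u ∈ X) : minDistX G F X y ≤ distF G F u y := by
  classical
  have hfin : {d : ℤ | ∃ x ∈ X, distF G F x y = d}.Finite := by
    apply (X.toFinite.image (fun x => distF G F x y)).subset
    rintro d ⟨x, hx, rfl⟩
    exact ⟨x, hx, rfl⟩
  exact csInf_le hfin.bddBelow ⟨u, hu, rfl⟩

lemma exists_split' {G : SimpleGraph V} (B : Set V) {v x : V} (Q : G.Walk v x) :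
    v ∉ B → (∃ t ∈ Q.support, t ∈ B) →
    ∃ (u t : V) (h : G.Adj u t) (Q₁ : G.Walk v u) (Q₂ : G.Walk t x),
      Q = Q₁.append (SimpleGraph.Walk.cons h Q₂) ∧ (∀ s ∈ Q₁.support, s ∉ B) ∧ t ∈ B := by
  induction Q with
  | nil =>
    intro hv hmeet
    obtain ⟨t, ht, htB⟩ := hmeet
    simp only [SimpleGraph.Walk.support_nil, List.mem_singleton] at ht
    subst ht
    exact absurd htB hv
  | @cons a b c h' Q' ih =>
    intro hv hmeet
    by_cases hb : b ∈ B
    · refine ⟨a, b, h', SimpleGraph.Walk.nil, Q', ?_, ?_, hb⟩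
      · simp
      · intro s hs
        simp only [SimpleGraph.Walk.support_nil, List.mem_singleton] at hs
        subst hs
        exact hv
    · have hmeet' : ∃ t ∈ Q'.support, t ∈ B := by
        obtain ⟨t, ht, htB⟩ := hmeet
        rw [SimpleGraph.Walk.support_cons, List.mem_cons] at ht
        rcases ht with rfl | ht'
        · exact absurd htB hv
        · exact ⟨t, ht', htB⟩
      obtain ⟨u, t, h, Q₁, Q₂, hQ, hQ₁, htB⟩ := ih hb hmeet'
      refine ⟨u, t, h, SimpleGraph.Walk.cons h' Q₁, Q₂, ?_, ?_, htB⟩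
      · rw [SimpleGraph.Walk.cons_append, ← hQ]
      · intro s hs
        rw [SimpleGraph.Walk.support_cons, List.mem_cons] at hs
        rcases hs with rfl | hs
        · exact hv
        · exact hQ₁ s hs

end Aux

/-- in the setting of Statement 5, every path of `Ĝ` between a vertex
`y ∈ Y` and a vertex of `X` that meets `Ẑ` has `F`-weight greater than
`min_{x ∈ X} d_F(x, y)` (distances computed in `G`). -/
theorem stmt_6 [Fintype V] (G Ghat : SimpleGraph V) (Vg T Y Z X : Set V)
    (F : Set (Sym2 V))
    (hGV : ∀ v w : V, G.Adj v w → v ∈ Vg ∧ w ∈ Vg)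
    (hT : T ⊆ Vg) (hGT : IsGraft G T) (hF : IsMinJoin G T F)
    (hXV : X ⊆ Vg) (hext : IsExtremeSet G F X)
    (hYZdisj : Disjoint Y Z) (hYZ : Y ∪ Z = Vg \ X)
    (hnoedge : ∀ y ∈ Y, ∀ z ∈ Z, ¬ G.Adj y z)
    (hFZ : ∀ e ∈ F, ∀ v ∈ Z, v ∉ e)
    (hsub : G ≤ Ghat)
    (hnew : ∀ v w : V, Ghat.Adj v w → ¬ G.Adj v w →
      (v ∈ X ∧ w ∉ Vg) ∨ (w ∈ X ∧ v ∉ Vg))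
    (hGhat : IsGraft Ghat T) :
    ∀ (y x : V) (Q : Ghat.Walk y x), Q.IsPath → y ∈ Y → x ∈ X →
      (∃ t ∈ Q.support, t ∈ Z ∪ Vgᶜ) → minDistX G F X y < walkWeight F Q := by
  classical
  -- basic set facts
  have hYVg : Y ⊆ Vg := fun a ha => (hYZ ▸ Set.mem_union_left Z ha : a ∈ Vg \ X).1
  have hZVg : Z ⊆ Vg := fun a ha => (hYZ ▸ Set.mem_union_right Y ha : a ∈ Vg \ X).1
  have hZX : ∀ a ∈ Z, a ∉ X := fun a ha => (hYZ ▸ Set.mem_union_right Y ha : a ∈ Vg \ X).2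
  have hYX : ∀ a ∈ Y, a ∉ X := fun a ha => (hYZ ▸ Set.mem_union_left Z ha : a ∈ Vg \ X).2
  set B : Set V := Z ∪ Vgᶜ with hBdef
  have hXB : ∀ a ∈ X, a ∉ B := by
    intro a haX hB
    rcases hB with hZ | hV
    · exact hZX a hZ haX
    · exact hV (hXV haX)
  have hYB : ∀ a ∈ Y, a ∉ B := by
    intro a haY hB
    rcases hB with hZ | hV
    · exact hYZdisj.ne_of_mem haY hZ rfl
    · exact hV (hYVg haY)
  -- no edge of F touches B
  have hFB : ∀ u t : V, t ∈ B → s(u, t) ∉ F := by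
    intro u t htB hmem
    have hedge : G.Adj u t := hF.1.1 hmem
    rcases htB with hZ | hV
    · exact hFZ _ hmem t hZ (Sym2.mem_mk_right u t)
    · exact hV (hGV u t hedge).2
  -- Ghat-neighbours of B lie in X ∪ B
  have nbr : ∀ t w : V, Ghat.Adj t w → t ∈ B → w ∈ X ∪ B := by
    intro t w hadj htB
    by_cases hG : G.Adj t w
    · rcases htB with hZ | hV
      · -- t ∈ Z : w ∈ Vg, w ∉ Y
        have hwVg : w ∈ Vg := (hGV t w hG).2
        by_cases hwX : w ∈ X
        · exact Or.inl hwX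
        · have : w ∈ Y ∪ Z := hYZ ▸ (⟨hwVg, hwX⟩ : w ∈ Vg \ X)
          rcases this with hwY | hwZ
          · exact absurd hG.symm (hnoedge w hwY t hZ)
          · exact Or.inr (Or.inl hwZ)
      · exact absurd (hGV t w hG).1 hV
    · rcases hnew t w hadj hG with ⟨htX, _⟩ | ⟨hwX, _⟩
      · exact absurd htB (hXB t htX)
      · exact Or.inl hwX
  -- walks avoiding B are G-walks
  have gtrans : ∀ {a b : V} (W : Ghat.Walk a b), (∀ s ∈ W.support, s ∉ B) →
      ∀ e ∈ W.edges, e ∈ G.edgeSet := by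
    intro a b W hW e he
    induction e using Sym2.ind with
    | _ p q =>
      have hadj : Ghat.Adj p q := W.adj_of_mem_edges he
      have hp : p ∈ W.support := W.fst_mem_support_of_mem_edges he
      have hq : q ∈ W.support := W.snd_mem_support_of_mem_edges he
      have hpVg : p ∈ Vg := by
        by_contra hc
        exact hW p hp (Or.inr hc)
      have hqVg : q ∈ Vg := by
        by_contra hc
        exact hW q hq (Or.inr hc)
      rw [SimpleGraph.mem_edgeSet]
      by_contra hG
      rcases hnew p q hadj hG with ⟨_, h2⟩ | ⟨_, h2⟩
      · exact h2 hqVg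
      · exact h2 hpVg
  -- key induction
  have key : ∀ (n : ℕ) (v x' : V) (Q : Ghat.Walk v x'), Q.length = n → Q.IsPath → x' ∈ X →
      (v ∈ X → 0 ≤ walkWeight F Q) ∧ (v ∈ B → 1 ≤ walkWeight F Q) := by
    intro n
    induction n using Nat.strong_induction_on with
    | _ n IH =>
      intro v x' Q hlen hpath hx'
      constructor
      · intro hvX
        by_cases hmeet : ∃ t ∈ Q.support, t ∈ B
        · obtain ⟨u', t, hadj, Q₁, Q₂, hQeq, hQ₁B, htB⟩ :=
            exists_split' B Q (hXB v hvX) hmeet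
          have hQ₁path : Q₁.IsPath := by
            rw [hQeq] at hpath
            exact hpath.of_append_left
          have hQ₂path : Q₂.IsPath := by
            rw [hQeq] at hpath
            exact hpath.of_append_right.of_cons
          have hu'X : u' ∈ X := by
            have hu'B : u' ∉ B := hQ₁B u' Q₁.end_mem_support
            rcases nbr t u' hadj.symm htB with h | h
            · exact h
            · exact absurd h hu'B
          -- weight of Q₁ ≥ 0
          have hedges := gtrans Q₁ hQ₁B
          have hp0 : 0 ≤ walkWeight F Q₁ := by
            have h1 : distF G F v u' ≤ walkWeight F (Q₁.transfer G hedges) :=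
              distF_le_walkWeight' F _ (hQ₁path.transfer hedges)
            rw [walkWeight_transfer'] at h1
            exact le_trans (hext v hvX u' hu'X) h1
          -- weight of Q₂ ≥ 1
          have hlen₂ : Q₂.length < n := by
            rw [← hlen, hQeq]
            simp [SimpleGraph.Walk.length_append, SimpleGraph.Walk.length_cons]
            omega
          have hp2 : 1 ≤ walkWeight F Q₂ :=
            (IH Q₂.length hlen₂ t x' Q₂ rfl hQ₂path hx').2 htB
          have hne : s(u', t) ∉ F := hFB u' t htB
          rw [hQeq, walkWeight_append', walkWeight_cons', if_neg hne]
          linarith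
        · push_neg at hmeet
          have hedges := gtrans Q hmeet
          have h1 : distF G F v x' ≤ walkWeight F (Q.transfer G hedges) :=
            distF_le_walkWeight' F _ (hpath.transfer hedges)
          rw [walkWeight_transfer'] at h1
          exact le_trans (hext v hvX x' hx') h1
      · intro hvB
        cases Q with
        | nil => exact absurd hvB (hXB v hx')
        | @cons _ w _ h' Q' =>
          have hwXB : w ∈ X ∪ B := nbr v w h' hvB
          have hne : s(v, w) ∉ F := by
            rw [Sym2.eq_swap]
            exact hFB w v hvB
          have hlen' : Q'.length < n := by
            rw [← hlen]
            simp [SimpleGraph.Walk.length_cons]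
          have hQ' := IH Q'.length hlen' w x' Q' rfl hpath.of_cons hx'
          have h0 : 0 ≤ walkWeight F Q' := by
            rcases hwXB with h | h
            · exact hQ'.1 h
            · linarith [hQ'.2 h]
          rw [walkWeight_cons', if_neg hne]
          linarith
  -- main argument
  intro y x Q hQpath hyY hxX hmeet
  obtain ⟨u', t, hadj, Q₁, Q₂, hQeq, hQ₁B, htB⟩ := exists_split' B Q (hYB y hyY) hmeet
  have hQ₁path : Q₁.IsPath := by
    rw [hQeq] at hQpath
    exact hQpath.of_append_left
  have hQ₂path : Q₂.IsPath := by
    rw [hQeq] at hQpath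
    exact hQpath.of_append_right.of_cons
  have hu'X : u' ∈ X := by
    have hu'B : u' ∉ B := hQ₁B u' Q₁.end_mem_support
    rcases nbr t u' hadj.symm htB with h | h
    · exact h
    · exact absurd h hu'B
  have hedges := gtrans Q₁ hQ₁B
  have hp1 : minDistX G F X y ≤ walkWeight F Q₁ := by
    have hrev : ((Q₁.transfer G hedges).reverse).IsPath := (hQ₁path.transfer hedges).reverse
    have h1 : distF G F u' y ≤ walkWeight F ((Q₁.transfer G hedges).reverse) :=
      distF_le_walkWeight' F _ hrev
    rw [walkWeight_reverse', walkWeight_transfer'] at h1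
    exact le_trans (minDistX_le_distF' F hu'X) h1
  have hp2 : 1 ≤ walkWeight F Q₂ :=
    (key Q₂.length t x Q₂ rfl hQ₂path hxX).2 htB
  have hne : s(u', t) ∉ F := hFB u' t htB
  rw [hQeq, walkWeight_append', walkWeight_cons', if_neg hne]
  linarith
end
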